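/- Let f₁,...,f_N be the standard basis of ℝᴺ, R > 0, and y₁,...,y_N ∈ ℝᴺ with ‖y_i‖_∞ ≤ 1 for each i. Set v_i = R·f_i + y_i. Then the closed Euclidean ball of radius R/√N − √N is contained in the absolutely convex hull (i.e., the convex hull of {±v_i : 1 ≤ i ≤ N}) of v₁,...,v_N. -/

import Mathlib

/-- If `vᵢ = R·fᵢ + yᵢ` with `‖yᵢ‖_∞ ≤ 1`, then the Euclidean ball of radius
`R/√N − √N` is contained in the absolutely convex hull of `v₁, …, v_N`. -/
theorem stmt2 {N : ℕ} (hN : 0 < N) (R : ℝ) (hR : 0 < R)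
    (y : Fin N → EuclideanSpace ℝ (Fin N))
    (hy : ∀ i j, |y i j| ≤ 1)
    (v : Fin N → EuclideanSpace ℝ (Fin N))
    (hv : ∀ i, v i = R • EuclideanSpace.single i 1 + y i)
    (hrad : 0 < R / Real.sqrt N - Real.sqrt N) :
    Metric.closedBall (0 : EuclideanSpace ℝ (Fin N)) (R / Real.sqrt N - Real.sqrt N) ⊆
      convexHull ℝ (Set.range v ∪ (-(Set.range v))) := by
  set r : ℝ := R / Real.sqrt N - Real.sqrt N with hr
  set sN : ℝ := Real.sqrt N with hsNdef
  have hsN : 0 < sN := Real.sqrt_pos.mpr (by exact_mod_cast hN)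
  intro x hx
  by_contra hxK
  have hSfin : (Set.range v ∪ (-(Set.range v))).Finite :=
    (Set.finite_range v).union (Set.finite_range v).neg
  obtain ⟨f, u, hfu, hux⟩ :=
    geometric_hahn_banach_closed_point (convex_convexHull ℝ _) (hSfin.isClosed_convexHull ℝ) hxK
  set φ : EuclideanSpace ℝ (Fin N) := WithLp.toLp 2 (fun j => f (EuclideanSpace.single j 1)) with hφ
  -- representation of f by coordinates
  have hrep : ∀ z : EuclideanSpace ℝ (Fin N), f z = ∑ j, z j * φ j := by
    intro z
    have hz : ∑ j, z j • EuclideanSpace.single j (1:ℝ) = z := by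
      simpa [EuclideanSpace.basisFun_apply, EuclideanSpace.basisFun_repr] using
        (EuclideanSpace.basisFun (Fin N) ℝ).sum_repr z
    calc f z = f (∑ j, z j • EuclideanSpace.single j (1:ℝ)) := by rw [hz]
      _ = ∑ j, z j * φ j := by
          rw [map_sum]; exact Finset.sum_congr rfl fun j _ => by simp [hφ]
  -- ℓ¹ norm of φ is at most √N * ‖φ‖
  have hL1 : ∑ j, |φ j| ≤ sN * ‖φ‖ := by
    set a : EuclideanSpace ℝ (Fin N) := WithLp.toLp 2 (fun j => |φ j|) with ha
    set b : EuclideanSpace ℝ (Fin N) := WithLp.toLp 2 (fun _ => (1:ℝ)) with hb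
    have h1 : (inner ℝ a b : ℝ) = ∑ j, |φ j| := by simp [PiLp.inner_apply, ha, hb]
    have h2 : ‖a‖ = ‖φ‖ := by
      rw [EuclideanSpace.norm_eq, EuclideanSpace.norm_eq]
      congr 1; exact Finset.sum_congr rfl fun j _ => by simp [ha, abs_abs]
    have h3 : ‖b‖ = sN := by
      rw [EuclideanSpace.norm_eq]
      simp [hb, hsNdef]
    have := real_inner_le_norm a b
    rw [h1, h2, h3] at this
    linarith [this]
  -- pick the coordinate of φ of maximal absolute value
  obtain ⟨i, -, hi⟩ := Finset.exists_max_image Finset.univ (fun j => |φ j|)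
    ⟨⟨0, hN⟩, Finset.mem_univ _⟩
  have hi' : ∀ j, |φ j| ≤ |φ i| := fun j => hi j (Finset.mem_univ j)
  have hnormφ : ‖φ‖ ≤ sN * |φ i| := by
    rw [EuclideanSpace.norm_eq]
    have hsum : ∑ j, ‖φ j‖ ^ 2 ≤ (N : ℝ) * |φ i| ^ 2 := by
      calc ∑ j, ‖φ j‖ ^ 2 ≤ ∑ _j : Fin N, |φ i| ^ 2 := by
            apply Finset.sum_le_sum
            intro j _
            have := hi' j
            rw [Real.norm_eq_abs]
            nlinarith [abs_nonneg (φ j)]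
        _ = (N : ℝ) * |φ i| ^ 2 := by simp [mul_comm]
    calc Real.sqrt (∑ j, ‖φ j‖ ^ 2) ≤ Real.sqrt ((N : ℝ) * |φ i| ^ 2) :=
          Real.sqrt_le_sqrt hsum
      _ = sN * |φ i| := by
          rw [Real.sqrt_mul (by positivity), Real.sqrt_sq_eq_abs, abs_abs]
  -- bound on f (y i)
  have hfy : |f (y i)| ≤ ∑ j, |φ j| := by
    rw [hrep (y i)]
    calc |∑ j, y i j * φ j| ≤ ∑ j, |y i j * φ j| := Finset.abs_sum_le_sum_abs _ _
      _ ≤ ∑ j, |φ j| := by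
          apply Finset.sum_le_sum
          intro j _
          rw [abs_mul]
          calc |y i j| * |φ j| ≤ 1 * |φ j| :=
                mul_le_mul_of_nonneg_right (hy i j) (abs_nonneg _)
            _ = |φ j| := one_mul _
  -- f (v i) decomposition
  have hfvi : f (v i) = R * φ i + f (y i) := by
    rw [hv i, map_add, map_smul]
    simp [hφ]
  -- lower bound: r * ‖φ‖ ≤ |f (v i)|
  have hlow : r * ‖φ‖ ≤ |f (v i)| := by
    have h1 : R * |φ i| - |f (y i)| ≤ |f (v i)| := by
      rw [hfvi]
      have h := abs_add_le (R * φ i + f (y i)) (-(f (y i)))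
      rw [add_neg_cancel_right, abs_neg, abs_mul, abs_of_pos hR] at h
      linarith
    have h2 : R * (‖φ‖ / sN) ≤ R * |φ i| := by
      apply mul_le_mul_of_nonneg_left _ hR.le
      rw [div_le_iff₀ hsN, mul_comm]
      exact hnormφ
    have hφnn : (0:ℝ) ≤ ‖φ‖ := norm_nonneg _
    have : r * ‖φ‖ = R * (‖φ‖ / sN) - sN * ‖φ‖ := by
      rw [hr]; field_simp
    rw [this]
    linarith
  -- |f (v i)| < u
  have hvmem : v i ∈ convexHull ℝ (Set.range v ∪ (-(Set.range v))) :=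
    subset_convexHull ℝ _ (Set.mem_union_left _ ⟨i, rfl⟩)
  have hvmem' : -(v i) ∈ convexHull ℝ (Set.range v ∪ (-(Set.range v))) :=
    subset_convexHull ℝ _ (Set.mem_union_right _ (Set.neg_mem_neg.2 ⟨i, rfl⟩))
  have hub : |f (v i)| < u := by
    rw [abs_lt]
    constructor
    · have := hfu _ hvmem'
      rw [map_neg] at this
      linarith
    · exact hfu _ hvmem
  -- upper bound: f x ≤ r * ‖φ‖
  have hxnorm : ‖x‖ ≤ r := by
    rwa [Metric.mem_closedBall, dist_zero_right] at hx
  have hfx : f x ≤ r * ‖φ‖ := by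
    have h1 : f x = (inner ℝ x φ : ℝ) := by rw [hrep x, PiLp.inner_apply]; simp [mul_comm]
    calc f x ≤ ‖x‖ * ‖φ‖ := h1 ▸ real_inner_le_norm x φ
      _ ≤ r * ‖φ‖ := mul_le_mul_of_nonneg_right hxnorm (norm_nonneg _)
  linarith
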